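/- Let q be a prime and A a multiplicative subgroup of F_q^× with |A| = d ≥ √q. If B, C ⊆ F_q satisfy |B|·|C| ≥ q^3/d^2, then there exist x ∈ B and y ∈ C with x + y ∈ A. -/

import Mathlib

open Finset Complex

namespace Stmt18Aux

variable (q : ℕ) [NeZero q]

noncomputable def charF (D : Finset (ZMod q)) (t : ZMod q) : ℂ :=
  ∑ x ∈ D, ZMod.stdAddChar (t * x)

lemma conj_std (u : ZMod q) :
    (starRingEnd ℂ) (ZMod.stdAddChar u) = ZMod.stdAddChar (-u) := by
  have h1 : ZMod.stdAddChar u * ZMod.stdAddChar (-u) = 1 := by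
    rw [← AddChar.map_add_eq_mul, add_neg_cancel, AddChar.map_zero_eq_one]
  have hn : ‖ZMod.stdAddChar (N := q) u‖ = 1 := by
    rw [ZMod.stdAddChar_apply]
    exact Circle.norm_coe _
  rw [← Complex.inv_eq_conj hn]
  exact (eq_inv_of_mul_eq_one_right h1).symm

lemma orth (u : ZMod q) :
    ∑ t : ZMod q, ZMod.stdAddChar (t * u) = if u = 0 then (q : ℂ) else 0 := by
  classical
  have := AddChar.sum_mulShift (ψ := ZMod.stdAddChar) u (ZMod.isPrimitive_stdAddChar q)
  simpa [ZMod.card] using this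

lemma parseval (D : Finset (ZMod q)) :
    ∑ t : ZMod q, Complex.normSq (charF q D t) = q * D.card := by
  classical
  have key : ∑ t : ZMod q, (Complex.normSq (charF q D t) : ℂ) = (q : ℂ) * D.card := by
    have h1 : ∀ t : ZMod q, (Complex.normSq (charF q D t) : ℂ)
        = ∑ x ∈ D, ∑ y ∈ D, ZMod.stdAddChar (t * (x - y)) := by
      intro t
      rw [← Complex.mul_conj]
      unfold charF
      rw [map_sum, Finset.sum_mul_sum]
      refine Finset.sum_congr rfl fun x hx => Finset.sum_congr rfl fun y hy => ?_
      rw [conj_std, ← AddChar.map_add_eq_mul]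
      ring_nf
    calc ∑ t : ZMod q, (Complex.normSq (charF q D t) : ℂ)
        = ∑ t : ZMod q, ∑ x ∈ D, ∑ y ∈ D, ZMod.stdAddChar (t * (x - y)) := by
          exact Finset.sum_congr rfl fun t _ => h1 t
      _ = ∑ x ∈ D, ∑ y ∈ D, ∑ t : ZMod q, ZMod.stdAddChar (t * (x - y)) := by
          rw [Finset.sum_comm]
          refine Finset.sum_congr rfl fun x _ => Finset.sum_comm
      _ = ∑ x ∈ D, ∑ y ∈ D, if x - y = 0 then (q : ℂ) else 0 := by
          refine Finset.sum_congr rfl fun x _ => Finset.sum_congr rfl fun y _ => orth q _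
      _ = ∑ x ∈ D, ∑ y ∈ D, if y = x then (q : ℂ) else 0 := by
          refine Finset.sum_congr rfl fun x _ => Finset.sum_congr rfl fun y _ => ?_
          congr 1
          simp [sub_eq_zero, eq_comm]
      _ = ∑ x ∈ D, (q : ℂ) := Finset.sum_congr rfl fun x hx => by
          simp [Finset.sum_ite_eq, hx]
      _ = (q : ℂ) * D.card := by rw [Finset.sum_const, nsmul_eq_mul, mul_comm]
  exact_mod_cast key

lemma norm_sq_eq (z : ℂ) : ‖z‖ ^ 2 = Complex.normSq z := by
  rw [← Complex.sq_norm]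

end Stmt18Aux

theorem stmt_18 (q : ℕ) (hq : q.Prime) (H : Subgroup (ZMod q)ˣ) (d : ℕ)
    (hd : d = Nat.card H) (hdq : q ≤ d ^ 2)
    (B C : Finset (ZMod q)) (hBC : q ^ 3 ≤ d ^ 2 * (B.card * C.card)) :
    ∃ x ∈ B, ∃ y ∈ C, ∃ a : (ZMod q)ˣ, a ∈ H ∧ x + y = (a : ZMod q) := by
  classical
  haveI : Fact q.Prime := ⟨hq⟩
  haveI : NeZero q := ⟨hq.ne_zero⟩
  by_contra hcon
  push_neg at hcon
  set ψ := ZMod.stdAddChar (N := q) with hψdef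
  set A : Finset (ZMod q) :=
    Finset.image (fun u : (ZMod q)ˣ => (u : ZMod q)) (H : Set (ZMod q)ˣ).toFinset with hA
  have hmem : ∀ z : ZMod q, z ∈ A ↔ ∃ u : (ZMod q)ˣ, u ∈ H ∧ (u : ZMod q) = z := by
    intro z; simp [hA]
  have hAcard : A.card = d := by
    rw [hA, Finset.card_image_of_injective _ (fun a b hab => Units.ext hab),
      Set.toFinset_card, hd, Nat.card_eq_fintype_card]
    rfl
  have hnotin : ∀ x ∈ B, ∀ y ∈ C, x + y ∉ A := by
    intro x hx y hy hxy
    obtain ⟨u, hu, huv⟩ := (hmem _).1 hxy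
    exact hcon x hx y hy u hu huv.symm
  set F := Stmt18Aux.charF q with hF
  have hFdef : ∀ (D : Finset (ZMod q)) (t : ZMod q), F D t = ∑ x ∈ D, ψ (t * x) := by
    intro D t; rfl
  -- invariance
  have himg : ∀ u : (ZMod q)ˣ, u ∈ H →
      A.image (fun x => (u : ZMod q) * x) = A := by
    intro u hu
    ext z
    simp only [Finset.mem_image]
    constructor
    · rintro ⟨x, hx, rfl⟩
      obtain ⟨v, hv, rfl⟩ := (hmem _).1 hx
      exact (hmem _).2 ⟨u * v, H.mul_mem hu hv, rfl⟩
    · intro hz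
      obtain ⟨v, hv, rfl⟩ := (hmem _).1 hz
      exact ⟨((u⁻¹ * v : (ZMod q)ˣ) : ZMod q),
        (hmem _).2 ⟨u⁻¹ * v, H.mul_mem (H.inv_mem hu) hv, rfl⟩, by
          rw [← Units.val_mul, mul_inv_cancel_left]⟩
  have hinv : ∀ u : (ZMod q)ˣ, u ∈ H → ∀ t : ZMod q, F A (t * (u : ZMod q)) = F A t := by
    intro u hu t
    rw [hFdef, hFdef]
    conv_rhs => rw [← himg u hu]
    rw [Finset.sum_image (fun a _ b _ hab =>
      mul_left_cancel₀ (Units.ne_zero u) hab)]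
    refine Finset.sum_congr rfl fun x hx => ?_
    ring_nf
  -- cardinalities
  have hq2 : 2 ≤ q := hq.two_le
  have hd0 : 0 < d := by rw [hd]; exact Nat.card_pos
  have hFA0 : F A 0 = (d : ℂ) := by
    rw [hFdef]
    simp only [zero_mul, AddChar.map_zero_eq_one]
    rw [Finset.sum_const, hAcard, nsmul_eq_mul, mul_one]
  have hFB0 : F B 0 = (B.card : ℂ) := by
    rw [hFdef]; simp [AddChar.map_zero_eq_one]
  have hFC0 : F C 0 = (C.card : ℂ) := by
    rw [hFdef]; simp [AddChar.map_zero_eq_one]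
  set E : Finset (ZMod q) := Finset.univ.erase 0 with hE
  have hsplitsum : ∀ f : ZMod q → ℂ, ∑ t : ZMod q, f t = f 0 + ∑ t ∈ E, f t := by
    intro f
    rw [hE, ← Finset.add_sum_erase _ f (Finset.mem_univ 0)]
  have hsplitsumR : ∀ f : ZMod q → ℝ, ∑ t : ZMod q, f t = f 0 + ∑ t ∈ E, f t := by
    intro f
    rw [hE, ← Finset.add_sum_erase _ f (Finset.mem_univ 0)]
  -- bound on normSq (F A t) for t ≠ 0
  have hEsum : ∑ t ∈ E, Complex.normSq (F A t) = (q : ℝ) * d - d ^ 2 := by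
    have := Stmt18Aux.parseval q A
    rw [hsplitsumR (fun t => Complex.normSq (F A t)), hFA0, hAcard] at this
    have h2 : Complex.normSq ((d : ℂ)) = (d : ℝ) ^ 2 := by
      rw [Complex.normSq_natCast]; ring
    rw [h2] at this
    linarith
  have hFA : ∀ t : ZMod q, t ≠ 0 → Complex.normSq (F A t) ≤ (q : ℝ) - d := by
    intro t ht
    set T : Finset (ZMod q) := A.image (fun a => t * a) with hT
    have hTsub : T ⊆ E := by
      intro s hs
      obtain ⟨a, ha, rfl⟩ := Finset.mem_image.1 hs
      obtain ⟨u, hu, rfl⟩ := (hmem _).1 ha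
      exact Finset.mem_erase.2 ⟨mul_ne_zero ht (Units.ne_zero u), Finset.mem_univ _⟩
    have hTsum : ∑ s ∈ T, Complex.normSq (F A s) = d * Complex.normSq (F A t) := by
      rw [hT, Finset.sum_image (fun a _ b _ hab => mul_left_cancel₀ ht hab)]
      have : ∀ a ∈ A, Complex.normSq (F A (t * a)) = Complex.normSq (F A t) := by
        intro a ha
        obtain ⟨u, hu, rfl⟩ := (hmem _).1 ha
        rw [hinv u hu t]
      rw [Finset.sum_congr rfl this, Finset.sum_const, hAcard, nsmul_eq_mul]
    have hle : ∑ s ∈ T, Complex.normSq (F A s) ≤ ∑ s ∈ E, Complex.normSq (F A s) :=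
      Finset.sum_le_sum_of_subset_of_nonneg hTsub fun _ _ _ => Complex.normSq_nonneg _
    rw [hTsum, hEsum] at hle
    have hd0' : (0 : ℝ) < d := by exact_mod_cast hd0
    nlinarith
  have hqd : (0 : ℝ) ≤ (q : ℝ) - d := by
    have hsub : A ⊆ Finset.univ.erase 0 := by
      intro z hz
      obtain ⟨u, hu, rfl⟩ := (hmem _).1 hz
      exact Finset.mem_erase.2 ⟨Units.ne_zero u, Finset.mem_univ _⟩
    have hcard : d ≤ q - 1 := by
      have h1 := Finset.card_le_card hsub
      rwa [hAcard, Finset.card_erase_of_mem (Finset.mem_univ _), Finset.card_univ,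
        ZMod.card] at h1
    have : d ≤ q := le_trans hcard (Nat.sub_le _ _)
    have : (d : ℝ) ≤ (q : ℝ) := by exact_mod_cast this
    linarith
  -- key identity
  have hkey : ∑ t : ZMod q, F B t * F C t * (starRingEnd ℂ) (F A t) = 0 := by
    have hterm : ∀ t : ZMod q, F B t * F C t * (starRingEnd ℂ) (F A t)
        = ∑ x ∈ B, ∑ y ∈ C, ∑ a ∈ A, ψ (t * (x + y - a)) := by
      intro t
      rw [hFdef, hFdef, hFdef, map_sum]
      simp only [Finset.sum_mul, Finset.mul_sum]
      have hterm' : ∀ x ∈ B, ∀ y ∈ C, ∀ a ∈ A,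
          ψ (t * x) * ψ (t * y) * (starRingEnd ℂ) (ψ (t * a)) = ψ (t * (x + y - a)) := by
        intro x hx y hy a ha
        rw [hψdef, Stmt18Aux.conj_std, ← AddChar.map_add_eq_mul, ← AddChar.map_add_eq_mul]
        congr 1
        ring
      calc ∑ a ∈ A, ∑ y ∈ C, ∑ x ∈ B, ψ (t * x) * ψ (t * y) * (starRingEnd ℂ) (ψ (t * a))
          = ∑ y ∈ C, ∑ a ∈ A, ∑ x ∈ B, ψ (t * x) * ψ (t * y) * (starRingEnd ℂ) (ψ (t * a)) :=
            Finset.sum_comm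
        _ = ∑ y ∈ C, ∑ x ∈ B, ∑ a ∈ A, ψ (t * x) * ψ (t * y) * (starRingEnd ℂ) (ψ (t * a)) :=
            Finset.sum_congr rfl fun y _ => Finset.sum_comm
        _ = ∑ x ∈ B, ∑ y ∈ C, ∑ a ∈ A, ψ (t * x) * ψ (t * y) * (starRingEnd ℂ) (ψ (t * a)) :=
            Finset.sum_comm
        _ = ∑ x ∈ B, ∑ y ∈ C, ∑ a ∈ A, ψ (t * (x + y - a)) :=
            Finset.sum_congr rfl fun x hx => Finset.sum_congr rfl fun y hy =>
              Finset.sum_congr rfl fun a ha => hterm' x hx y hy a ha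
    calc ∑ t : ZMod q, F B t * F C t * (starRingEnd ℂ) (F A t)
        = ∑ x ∈ B, ∑ y ∈ C, ∑ a ∈ A, ∑ t : ZMod q, ψ (t * (x + y - a)) := by
          rw [Finset.sum_congr rfl fun t _ => hterm t, Finset.sum_comm]
          refine Finset.sum_congr rfl fun x _ => ?_
          rw [Finset.sum_comm]
          refine Finset.sum_congr rfl fun y _ => ?_
          rw [Finset.sum_comm]
      _ = 0 := by
          refine Finset.sum_eq_zero fun x hx => Finset.sum_eq_zero fun y hy =>
            Finset.sum_eq_zero fun a ha => ?_
          rw [hψdef, Stmt18Aux.orth, if_neg]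
          intro h0
          exact hnotin x hx y hy ((sub_eq_zero.mp h0) ▸ ha)
  -- split off t = 0
  have hsplit : (B.card : ℂ) * C.card * d
      = -∑ t ∈ E, F B t * F C t * (starRingEnd ℂ) (F A t) := by
    have := hsplitsum (fun t => F B t * F C t * (starRingEnd ℂ) (F A t))
    rw [hkey, hFB0, hFC0, hFA0] at this
    have hconjd : (starRingEnd ℂ) ((d : ℂ)) = (d : ℂ) := by
      simp
    rw [hconjd] at this
    linear_combination -this
  -- absolute value bound
  have habs : (B.card : ℝ) * C.card * d ≤ ∑ t ∈ E, ‖F B t‖ * ‖F C t‖ * ‖F A t‖ := by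
    have h1 : ‖(B.card : ℂ) * C.card * (d : ℂ)‖ = (B.card : ℝ) * C.card * d := by
      simp [norm_mul]
    calc (B.card : ℝ) * C.card * d
        = ‖(B.card : ℂ) * C.card * (d : ℂ)‖ := h1.symm
      _ = ‖∑ t ∈ E, F B t * F C t * (starRingEnd ℂ) (F A t)‖ := by rw [hsplit, norm_neg]
      _ ≤ ∑ t ∈ E, ‖F B t * F C t * (starRingEnd ℂ) (F A t)‖ := norm_sum_le _ _
      _ = ∑ t ∈ E, ‖F B t‖ * ‖F C t‖ * ‖F A t‖ := by
          refine Finset.sum_congr rfl fun t _ => ?_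
          rw [norm_mul, norm_mul, RCLike.norm_conj]
  -- Cauchy-Schwarz
  have hCS : (∑ t ∈ E, (‖F B t‖ * ‖F A t‖) * ‖F C t‖) ^ 2
      ≤ (∑ t ∈ E, (‖F B t‖ * ‖F A t‖) ^ 2) * (∑ t ∈ E, ‖F C t‖ ^ 2) :=
    Finset.sum_mul_sq_le_sq_mul_sq E _ _
  have hBtot : ∑ t ∈ E, ‖F B t‖ ^ 2 ≤ (q : ℝ) * B.card := by
    have h1 : ∑ t : ZMod q, ‖F B t‖ ^ 2 = (q : ℝ) * B.card := by
      rw [← Stmt18Aux.parseval q B]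
      exact Finset.sum_congr rfl fun t _ => Stmt18Aux.norm_sq_eq _
    rw [← h1]
    exact Finset.sum_le_sum_of_subset_of_nonneg (Finset.subset_univ E)
      fun _ _ _ => sq_nonneg _
  have hCtot : ∑ t ∈ E, ‖F C t‖ ^ 2 ≤ (q : ℝ) * C.card := by
    have h1 : ∑ t : ZMod q, ‖F C t‖ ^ 2 = (q : ℝ) * C.card := by
      rw [← Stmt18Aux.parseval q C]
      exact Finset.sum_congr rfl fun t _ => Stmt18Aux.norm_sq_eq _
    rw [← h1]
    exact Finset.sum_le_sum_of_subset_of_nonneg (Finset.subset_univ E)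
      fun _ _ _ => sq_nonneg _
  have hBAtot : ∑ t ∈ E, (‖F B t‖ * ‖F A t‖) ^ 2 ≤ ((q : ℝ) - d) * ((q : ℝ) * B.card) := by
    calc ∑ t ∈ E, (‖F B t‖ * ‖F A t‖) ^ 2
        ≤ ∑ t ∈ E, ‖F B t‖ ^ 2 * ((q : ℝ) - d) := by
          refine Finset.sum_le_sum fun t ht => ?_
          rw [mul_pow]
          have ht0 : t ≠ 0 := (Finset.mem_erase.1 ht).1
          have h2 : ‖F A t‖ ^ 2 ≤ (q : ℝ) - d := by
            rw [Stmt18Aux.norm_sq_eq]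
            exact hFA t ht0
          exact mul_le_mul_of_nonneg_left h2 (sq_nonneg _)
      _ = ((q : ℝ) - d) * ∑ t ∈ E, ‖F B t‖ ^ 2 := by
          rw [Finset.mul_sum]
          exact Finset.sum_congr rfl fun t _ => mul_comm _ _
      _ ≤ ((q : ℝ) - d) * ((q : ℝ) * B.card) := by
          exact mul_le_mul_of_nonneg_left hBtot hqd
  -- combine
  have hEorder : ∑ t ∈ E, ‖F B t‖ * ‖F C t‖ * ‖F A t‖
      = ∑ t ∈ E, (‖F B t‖ * ‖F A t‖) * ‖F C t‖ :=
    Finset.sum_congr rfl fun t _ => by ring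
  have hb0 : (0 : ℝ) ≤ (B.card : ℝ) := Nat.cast_nonneg _
  have hc0 : (0 : ℝ) ≤ (C.card : ℝ) := Nat.cast_nonneg _
  have hd0R : (0 : ℝ) < (d : ℝ) := by exact_mod_cast hd0
  have hqR : (0 : ℝ) < (q : ℝ) := by exact_mod_cast hq.pos
  have hfinal : ((B.card : ℝ) * C.card * d) ^ 2
      ≤ ((q : ℝ) - d) * ((q : ℝ) * B.card) * ((q : ℝ) * C.card) := by
    have habs' : (B.card : ℝ) * C.card * d ≤ ∑ t ∈ E, (‖F B t‖ * ‖F A t‖) * ‖F C t‖ := by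
      rw [← hEorder]; exact habs
    have hnn : (0 : ℝ) ≤ (B.card : ℝ) * C.card * d := by
      have := hd0R.le
      exact mul_nonneg (mul_nonneg hb0 hc0) this
    calc ((B.card : ℝ) * C.card * d) ^ 2
        ≤ (∑ t ∈ E, (‖F B t‖ * ‖F A t‖) * ‖F C t‖) ^ 2 := pow_le_pow_left₀ hnn habs' 2
      _ ≤ (∑ t ∈ E, (‖F B t‖ * ‖F A t‖) ^ 2) * (∑ t ∈ E, ‖F C t‖ ^ 2) := hCS
      _ ≤ (((q : ℝ) - d) * ((q : ℝ) * B.card)) * ((q : ℝ) * C.card) := by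
          have hs2 : (0 : ℝ) ≤ ∑ t ∈ E, ‖F C t‖ ^ 2 :=
            Finset.sum_nonneg fun _ _ => sq_nonneg _
          have step1 : (∑ t ∈ E, (‖F B t‖ * ‖F A t‖) ^ 2) * (∑ t ∈ E, ‖F C t‖ ^ 2)
              ≤ (((q : ℝ) - d) * ((q : ℝ) * B.card)) * (∑ t ∈ E, ‖F C t‖ ^ 2) :=
            mul_le_mul_of_nonneg_right hBAtot hs2
          have step2 : (((q : ℝ) - d) * ((q : ℝ) * B.card)) * (∑ t ∈ E, ‖F C t‖ ^ 2)
              ≤ (((q : ℝ) - d) * ((q : ℝ) * B.card)) * ((q : ℝ) * C.card) :=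
            mul_le_mul_of_nonneg_left hCtot
              (mul_nonneg hqd (mul_nonneg hqR.le hb0))
          exact le_trans step1 step2
  -- numerical contradiction
  have hbc0 : (0 : ℝ) < (B.card : ℝ) * C.card := by
    rcases Nat.eq_zero_or_pos (B.card * C.card) with h0 | hpos
    · exfalso
      rw [h0, mul_zero] at hBC
      have : 0 < q ^ 3 := pow_pos hq.pos 3
      omega
    · have : (0 : ℝ) < ((B.card * C.card : ℕ) : ℝ) := by exact_mod_cast hpos
      rwa [Nat.cast_mul] at this
  have hBCR : (q : ℝ) ^ 3 ≤ (d : ℝ) ^ 2 * ((B.card : ℝ) * C.card) := by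
    have : ((q ^ 3 : ℕ) : ℝ) ≤ ((d ^ 2 * (B.card * C.card) : ℕ) : ℝ) := by
      exact_mod_cast hBC
    push_cast at this
    linarith
  have e0 : ((d : ℝ) ^ 2 * ((B.card : ℝ) * C.card)) * ((B.card : ℝ) * C.card)
      ≤ (((q : ℝ) - d) * (q : ℝ) ^ 2) * ((B.card : ℝ) * C.card) := by
    calc ((d : ℝ) ^ 2 * ((B.card : ℝ) * C.card)) * ((B.card : ℝ) * C.card)
        = ((B.card : ℝ) * C.card * d) ^ 2 := by ring
      _ ≤ ((q : ℝ) - d) * ((q : ℝ) * B.card) * ((q : ℝ) * C.card) := hfinal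
      _ = (((q : ℝ) - d) * (q : ℝ) ^ 2) * ((B.card : ℝ) * C.card) := by ring
  have e1 : (d : ℝ) ^ 2 * ((B.card : ℝ) * C.card) ≤ ((q : ℝ) - d) * (q : ℝ) ^ 2 :=
    le_of_mul_le_mul_right e0 hbc0
  have expand : ((q : ℝ) - d) * (q : ℝ) ^ 2 = (q : ℝ) ^ 3 - d * (q : ℝ) ^ 2 := by ring
  have hdq2 : (0 : ℝ) < (d : ℝ) * (q : ℝ) ^ 2 := mul_pos hd0R (pow_pos hqR 2)
  linarith
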